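/- Let n be a natural number and ε > 0. Let X = OnePoint (EuclideanSpace ℝ (Fin n)) be the one-point compactification of ℝⁿ, and let C ⊆ X be the closed subset consisting of the point at infinity together with all v ∈ EuclideanSpace ℝ (Fin n) with ε ≤ ‖v‖. Let X/C denote the quotient topological space obtained by identifying all points of C to a single point. Then the quotient map X → X/C is a homotopy equivalence: there is a continuous map X/C → X such that both composites are homotopic to the respective identity maps. (The levelwise content of the Corollary in Section 3 asserting that the unit map 𝕊_k → 𝕊_{k,ε} — given levelwise by the Pontrjagin–Thom collapse S^{mk} → B̄_ε(0)/∂B̄_ε(0) — is a level weak equivalence.) -/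

import Mathlib

open Metric

noncomputable section

/-- `ℝⁿ` with the Euclidean norm. -/
abbrev E (n : ℕ) := EuclideanSpace ℝ (Fin n)

/-- The one-point compactification `S^n` of `ℝⁿ`. -/
abbrev X (n : ℕ) := OnePoint (E n)

/-- The closed subset of the one-point compactification consisting of the point at
infinity together with all `v` with `ε ≤ ‖v‖`. -/
def C (n : ℕ) (ε : ℝ) : Set (X n) :=
  {OnePoint.infty} ∪ (OnePoint.some '' {v : E n | ε ≤ ‖v‖})

/-- The setoid on `X` identifying all points of `C` to a single point (and nothing else). -/
def collapseSetoid (n : ℕ) (ε : ℝ) : Setoid (X n) where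
  r x y := x = y ∨ (x ∈ C n ε ∧ y ∈ C n ε)
  iseqv := by
    constructor
    · intro x; exact Or.inl rfl
    · rintro x y (rfl | h); exacts [Or.inl rfl, Or.inr ⟨h.2, h.1⟩]
    · rintro x y z (rfl | h) (rfl | h')
      exacts [Or.inl rfl, Or.inr h', Or.inr h, Or.inr ⟨h.1, h'.2⟩]

/-- The quotient space `X/C`, with the quotient topology. -/
def XmodC (n : ℕ) (ε : ℝ) : Type := Quotient (collapseSetoid n ε)

instance (n : ℕ) (ε : ℝ) : TopologicalSpace (XmodC n ε) :=
  instTopologicalSpaceQuotient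

/-- The quotient map `X → X/C`. -/
def collapseMap (n : ℕ) (ε : ℝ) : C(X n, XmodC n ε) :=
  ⟨Quotient.mk (collapseSetoid n ε), continuous_quotient_mk'⟩


open OnePoint unitInterval Filter Topology

namespace CollapseAux

variable (n : ℕ) (ε : ℝ)

/-- scaling denominator -/
def d (t : ℝ) (v : E n) : ℝ := (1 - t) * max (ε - ‖v‖) 0 + t

lemma continuous_d : Continuous fun p : unitInterval × E n => d n ε (p.1 : ℝ) p.2 := by
  unfold d; fun_prop

lemma d_nonneg (t : unitInterval) (v : E n) : 0 ≤ d n ε (t : ℝ) v := by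
  have h1 : (0:ℝ) ≤ 1 - (t:ℝ) := by simpa using t.2.2
  exact add_nonneg (mul_nonneg h1 (le_max_right _ 0)) t.2.1

lemma d_of_le (t : ℝ) {v : E n} (hv : ε ≤ ‖v‖) : d n ε t v = t := by
  simp [d, max_eq_right (by linarith : ε - ‖v‖ ≤ 0)]

/-- the straightening map, `∞` where the denominator vanishes -/
def G (p : unitInterval × E n) : X n :=
  if h : d n ε (p.1 : ℝ) p.2 = 0 then ∞ else ((d n ε (p.1 : ℝ) p.2)⁻¹ • p.2 : E n)

lemma continuous_G (hε : 0 < ε) : Continuous (G n ε) := by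
  rw [continuous_iff_continuousAt]
  intro q
  by_cases hq : d n ε (q.1 : ℝ) q.2 = 0
  · -- tendsto ∞
    have hG : G n ε q = ∞ := dif_pos hq
    rw [ContinuousAt, hG, (OnePoint.hasBasis_nhds_infty).tendsto_right_iff]
    rintro s ⟨-, hsc⟩
    obtain ⟨R, hR⟩ := hsc.isBounded.subset_closedBall 0
    -- ‖q.2‖ ≥ ε since d = 0 forces max (ε - ‖v‖) 0 = 0 and t = 0
    have ht0 : (q.1 : ℝ) = 0 := by
      by_contra h
      have h1 : (0:ℝ) < q.1 := lt_of_le_of_ne q.1.2.1 (Ne.symm h)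
      have := d_nonneg n ε q.1 q.2
      have h2 : (0:ℝ) ≤ (1 - (q.1:ℝ)) * max (ε - ‖q.2‖) 0 := by
        have h3 : (0:ℝ) ≤ 1 - (q.1:ℝ) := by simpa using q.1.2.2
        positivity
      unfold d at hq; linarith
    have hv : ε ≤ ‖q.2‖ := by
      rw [ht0] at hq
      simp only [d, sub_zero, one_mul, add_zero] at hq
      by_contra h
      push_neg at h
      rw [max_eq_left (by linarith)] at hq
      linarith
    set c := (ε / 2) / (|R| + 1) with hc
    have hcpos : 0 < c := by positivity
    have hU : ∀ᶠ p in 𝓝 q, ε / 2 < ‖p.2‖ ∧ d n ε (p.1 : ℝ) p.2 < c := by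
      have h1 : ∀ᶠ p : unitInterval × E n in 𝓝 q, ε / 2 < ‖p.2‖ := by
        have : ContinuousAt (fun p : unitInterval × E n => ‖p.2‖) q := by fun_prop
        exact this.eventually_const_lt (by linarith)
      have h2 : ∀ᶠ p : unitInterval × E n in 𝓝 q, d n ε (p.1 : ℝ) p.2 < c := by
        have : ContinuousAt (fun p : unitInterval × E n => d n ε (p.1 : ℝ) p.2) q :=
          (continuous_d n ε).continuousAt
        exact this.eventually_lt_const (by show d n ε (q.1 : ℝ) q.2 < c; rw [hq]; exact hcpos)
      exact h1.and h2
    refine hU.mono ?_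
    rintro p ⟨h1, h2⟩
    by_cases hp : d n ε (p.1 : ℝ) p.2 = 0
    · right; simp [G, hp]
    · left
      refine ⟨(d n ε (p.1 : ℝ) p.2)⁻¹ • p.2, ?_, by simp [G, hp]⟩
      intro hmem
      have hball := hR hmem
      rw [mem_closedBall, dist_zero_right, norm_smul, Real.norm_eq_abs] at hball
      have hd0 : 0 < d n ε (p.1 : ℝ) p.2 := lt_of_le_of_ne (d_nonneg n ε p.1 p.2) (Ne.symm hp)
      rw [abs_of_pos (inv_pos.2 hd0)] at hball
      have hballv : ‖p.2‖ ≤ |R| * d n ε (p.1 : ℝ) p.2 := by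
        rw [inv_mul_le_iff₀ hd0] at hball
        calc ‖p.2‖ ≤ R * d n ε (p.1 : ℝ) p.2 := by linarith [hball]
        _ ≤ |R| * d n ε (p.1 : ℝ) p.2 := by nlinarith [le_abs_self R, hd0.le]
      have hceq : c * (|R| + 1) = ε / 2 := by
        rw [hc]; field_simp
      nlinarith [abs_nonneg R]
  · -- near q, G is coe of a continuous map
    have hopen : IsOpen {p : unitInterval × E n | d n ε (p.1 : ℝ) p.2 ≠ 0} :=
      isOpen_compl_singleton.preimage (continuous_d n ε)
    have heq : (fun p : unitInterval × E n => (((d n ε (p.1 : ℝ) p.2)⁻¹ • p.2 : E n) : X n))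
        =ᶠ[nhds q] G n ε := by
      filter_upwards [hopen.mem_nhds hq] with p hp
      simp [G, hp]
    have hcont : ContinuousAt
        (fun p : unitInterval × E n => (((d n ε (p.1 : ℝ) p.2)⁻¹ • p.2 : E n) : X n)) q := by
      exact (OnePoint.continuous_coe.continuousAt).comp
        ((((continuous_d n ε).continuousAt).inv₀ hq).smul continuousAt_snd)
    exact hcont.congr heq

/-- The full homotopy on the one-point compactification. -/
def H (p : unitInterval × X n) : X n :=
  p.2.elim ∞ (fun v => G n ε (p.1, v))

@[simp] lemma H_infty (t : unitInterval) : H n ε (t, ∞) = ∞ := rfl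

@[simp] lemma H_coe (t : unitInterval) (v : E n) : H n ε (t, (v : X n)) = G n ε (t, v) := rfl

lemma continuous_H (hε : 0 < ε) : Continuous (H n ε) := by
  rw [continuous_iff_continuousAt]
  rintro ⟨t, x⟩
  induction x using OnePoint.rec with
  | coe v =>
    have he : IsOpenEmbedding
        (fun q : unitInterval × E n => ((q.1, (q.2 : X n)) : unitInterval × X n)) :=
      IsOpenEmbedding.id.prodMap OnePoint.isOpenEmbedding_coe
    have : ContinuousAt (H n ε ∘ fun q : unitInterval × E n => ((q.1, (q.2 : X n)))) (t, v) :=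
      (continuous_G n ε hε).continuousAt
    exact he.continuousAt_iff.1 this
  | infty =>
    rw [ContinuousAt, H_infty, (OnePoint.hasBasis_nhds_infty).tendsto_right_iff]
    rintro s ⟨-, hsc⟩
    obtain ⟨R, hR⟩ := hsc.isBounded.subset_closedBall 0
    have hN : ((fun v : E n => (v : X n)) '' (closedBall 0 (max R ε))ᶜ ∪ {∞}) ∈ nhds (∞ : X n) :=
      (OnePoint.hasBasis_nhds_infty).mem_of_mem ⟨isClosed_closedBall, isCompact_closedBall _ _⟩
    have hres : (Set.univ ×ˢ ((fun v : E n => (v : X n)) '' (closedBall 0 (max R ε))ᶜ ∪ {∞}))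
        ∈ nhds ((t, ∞) : unitInterval × X n) := prod_mem_nhds Filter.univ_mem hN
    refine Filter.eventually_of_mem hres ?_
    rintro ⟨s', x⟩ ⟨-, hx⟩
    induction x using OnePoint.rec with
    | infty => right; rfl
    | coe v =>
      rcases hx with ⟨w, hw, hwv⟩ | h
      · have hwv' : w = v := OnePoint.coe_injective hwv
        subst hwv'
        rw [Set.mem_compl_iff, mem_closedBall, dist_zero_right, not_le] at hw
        have hvε : ε ≤ ‖w‖ := le_of_lt (lt_of_le_of_lt (le_max_right R ε) hw)
        have hd : d n ε (s' : ℝ) w = (s' : ℝ) := d_of_le n ε _ hvε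
        by_cases hs0 : d n ε (s' : ℝ) w = 0
        · right; simp [H, G, hs0]
        · left
          refine ⟨(d n ε (s' : ℝ) w)⁻¹ • w, ?_, by simp [H, G, hs0]⟩
          intro hmem
          have := hR hmem
          rw [mem_closedBall, dist_zero_right, norm_smul, Real.norm_eq_abs] at this
          have hd0 : 0 < d n ε (s' : ℝ) w :=
            lt_of_le_of_ne (d_nonneg n ε s' w) (Ne.symm hs0)
          rw [abs_of_pos (inv_pos.2 hd0)] at this
          have h1 : ‖w‖ ≤ (d n ε (s' : ℝ) w) * R := by
            rw [inv_mul_le_iff₀ hd0] at this; linarith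
          have h2 : (d n ε (s' : ℝ) w) ≤ 1 := by rw [hd]; exact s'.2.2
          have h3 : R < ‖w‖ := lt_of_le_of_lt (le_max_left R ε) hw
          nlinarith [hd0.le, (hε.trans_le hvε)]
      · exact absurd h (by exact Option.some_ne_none v)

lemma H_one (x : X n) : H n ε (1, x) = x := by
  induction x using OnePoint.rec with
  | infty => rfl
  | coe v =>
    show G n ε (1, v) = (v : X n)
    have hd : d n ε ((1 : unitInterval) : ℝ) v = 1 := by simp [d]
    rw [G, dif_neg (by rw [hd]; norm_num)]
    rw [hd, inv_one, one_smul]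

lemma H_zero_of_memC (hε : 0 < ε) {x : X n} (hx : x ∈ C n ε) : H n ε (0, x) = ∞ := by
  rcases hx with hx | ⟨v, hv, rfl⟩
  · rw [Set.mem_singleton_iff] at hx; subst hx; rfl
  · show G n ε (0, v) = ∞
    rw [G]
    rw [dif_pos (by rw [d_of_le n ε _ hv]; norm_num)]

lemma H_memC (hε : 0 < ε) (t : unitInterval) {x : X n} (hx : x ∈ C n ε) :
    H n ε (t, x) ∈ C n ε := by
  rcases hx with hx | ⟨v, hv, rfl⟩
  · rw [Set.mem_singleton_iff] at hx; subst hx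
    exact Or.inl rfl
  · have hd : d n ε ((t : unitInterval) : ℝ) v = (t : ℝ) := d_of_le n ε _ hv
    by_cases ht : d n ε ((t : unitInterval) : ℝ) v = 0
    · left
      show G n ε (t, v) ∈ _
      rw [G, dif_pos ht]; rfl
    · right
      refine ⟨(d n ε ((t : unitInterval) : ℝ) v)⁻¹ • v, ?_,
        by show OnePoint.some _ = G n ε (t, v); rw [G, dif_neg ht]⟩
      have hd0 : 0 < d n ε ((t : unitInterval) : ℝ) v :=
        lt_of_le_of_ne (d_nonneg n ε t v) (Ne.symm ht)
      have hd1 : d n ε ((t : unitInterval) : ℝ) v ≤ 1 := by rw [hd]; exact t.2.2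
      have h1 : (1 : ℝ) ≤ (d n ε ((t : unitInterval) : ℝ) v)⁻¹ := (one_le_inv₀ hd0).2 hd1
      show ε ≤ ‖(d n ε ((t : unitInterval) : ℝ) v)⁻¹ • v‖
      rw [norm_smul, Real.norm_eq_abs, abs_of_pos (inv_pos.2 hd0)]
      calc ε ≤ ‖v‖ := hv
        _ = 1 * ‖v‖ := (one_mul _).symm
        _ ≤ (d n ε ((t : unitInterval) : ℝ) v)⁻¹ * ‖v‖ :=
          mul_le_mul_of_nonneg_right h1 (norm_nonneg v)

end CollapseAux

/-- The collapse map `S^n → B̄_ε(0)/∂B̄_ε(0)`, i.e. the quotient map from the one-point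
compactification of `ℝⁿ` that crushes the closed set
`C = {∞} ∪ {v : ε ≤ ‖v‖}` to a point, is a homotopy equivalence: there is a continuous
map `X/C → X` such that both composites are homotopic to the respective identities. -/
theorem collapse_homotopyEquiv (n : ℕ) (ε : ℝ) (hε : 0 < ε) :
    ∃ g : C(XmodC n ε, X n),
      ((collapseMap n ε).comp g).Homotopic (ContinuousMap.id (XmodC n ε)) ∧
      (g.comp (collapseMap n ε)).Homotopic (ContinuousMap.id (X n)) := by
  classical
  set φ : X n → X n := fun x => CollapseAux.H n ε (0, x) with hφdef
  have hφC : ∀ x ∈ C n ε, φ x = OnePoint.infty := fun x hx => CollapseAux.H_zero_of_memC n ε hε hx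
  have hφlift : ∀ a b, (collapseSetoid n ε).r a b → φ a = φ b := by
    rintro a b (rfl | ⟨ha, hb⟩)
    · rfl
    · rw [hφC a ha, hφC b hb]
  have contφ : Continuous φ :=
    (CollapseAux.continuous_H n ε hε).comp (Continuous.prodMk continuous_const continuous_id)
  have contg : Continuous (Quotient.lift φ hφlift) :=
    (isQuotientMap_quotient_mk').continuous_iff.mpr contφ
  refine ⟨⟨Quotient.lift φ hφlift, contg⟩, ?_, ?_⟩
  · -- collapse ∘ g ≃ id on X/C
    have hHC : ∀ (t : unitInterval) (x : X n), x ∈ C n ε → CollapseAux.H n ε (t, x) ∈ C n ε :=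
      fun t x hx => CollapseAux.H_memC n ε hε t hx
    have hwd : ∀ (t : unitInterval) (a b : X n), (collapseSetoid n ε).r a b →
        Quotient.mk (collapseSetoid n ε) (CollapseAux.H n ε (t, a)) =
        Quotient.mk (collapseSetoid n ε) (CollapseAux.H n ε (t, b)) := by
      rintro t a b (rfl | ⟨ha, hb⟩)
      · rfl
      · exact Quotient.sound (Or.inr ⟨hHC t a ha, hHC t b hb⟩)
    let K : unitInterval × XmodC n ε → XmodC n ε := fun p =>
      Quotient.lift (fun x => Quotient.mk (collapseSetoid n ε) (CollapseAux.H n ε (p.1, x)))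
        (hwd p.1) p.2
    have contK : Continuous K := by
      refine IsQuotientMap.continuous_lift_prod_right isQuotientMap_quotient_mk' ?_
      show Continuous fun p : unitInterval × X n =>
        Quotient.mk (collapseSetoid n ε) (CollapseAux.H n ε (p.1, p.2))
      exact continuous_quotient_mk'.comp (CollapseAux.continuous_H n ε hε)
    refine ⟨⟨⟨K, contK⟩, ?_, ?_⟩⟩
    · refine Quotient.ind ?_
      intro x
      rfl
    · refine Quotient.ind ?_
      intro x
      show Quotient.mk (collapseSetoid n ε) (CollapseAux.H n ε (1, x)) = Quotient.mk _ x
      rw [CollapseAux.H_one]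
  · -- g ∘ collapse ≃ id on X
    refine ⟨⟨⟨CollapseAux.H n ε, CollapseAux.continuous_H n ε hε⟩, ?_, ?_⟩⟩
    · intro x; rfl
    · intro x; exact CollapseAux.H_one n ε x


end
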